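/- Σ_{t≥0} U_{2t}(q) = ∏_{k≥1} (1−q^{6k}) · ((1−q^k)(1−q^{2k})(1−q^{3k}))^{−1} in ℚ⟦q⟧. -/

import Mathlib

open PowerSeries Finset

noncomputable section

/-- The operator `D = q·d/dq` on `ℚ⟦q⟧`, coefficientwise `aₙ ↦ n·aₙ`. -/
def Dq (F : ℚ⟦X⟧) : ℚ⟦X⟧ := PowerSeries.mk fun n => (n : ℚ) * coeff n F

/-- `E₂(q) = 1 - 24 Σ_{n≥1} σ₁(n) qⁿ`. -/
def E2 : ℚ⟦X⟧ := PowerSeries.mk fun n => if n = 0 then 1 else -24 * ∑ d ∈ n.divisors, (d : ℚ)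

/-- `E₄(q) = 1 + 240 Σ_{n≥1} σ₃(n) qⁿ`. -/
def E4 : ℚ⟦X⟧ := PowerSeries.mk fun n => if n = 0 then 1 else 240 * ∑ d ∈ n.divisors, (d : ℚ) ^ 3

/-- `E₆(q) = 1 - 504 Σ_{n≥1} σ₅(n) qⁿ`. -/
def E6 : ℚ⟦X⟧ := PowerSeries.mk fun n => if n = 0 then 1 else -504 * ∑ d ∈ n.divisors, (d : ℚ) ^ 5

/-- `∏_{k≥1} (1 - qᵏ)`, defined coefficientwise by truncated finite products
(factors with `k > N` do not affect the `N`-th coefficient). -/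
def eulerProd : ℚ⟦X⟧ :=
  PowerSeries.mk fun N => coeff N (∏ k ∈ Finset.Icc 1 N, (1 - X ^ k : ℚ⟦X⟧))

/-- `Σ_{n ∈ ℤ} (-1)ⁿ (6n+1)^{2t} q^{n(3n+1)/2}` (any `n` with `n(3n+1)/2 = N`
satisfies `|n| ≤ N`). -/
def pentagonalSum (t : ℕ) : ℚ⟦X⟧ := PowerSeries.mk fun N =>
  ∑ n ∈ Finset.Icc (-(N : ℤ)) (N : ℤ),
    if n * (3 * n + 1) = 2 * N then (-1 : ℚ) ^ n * ((6 * n + 1 : ℤ) : ℚ) ^ (2 * t) else 0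

/-- `θ₂(q)⁴ = 16 q (Σ_{n≥0} q^{n(n+1)})⁴`. -/
def theta2four : ℚ⟦X⟧ :=
  16 * X * (PowerSeries.mk fun N => ∑ n ∈ Finset.range (N + 1),
    if n * (n + 1) = N then (1 : ℚ) else 0) ^ 4

/-- `θ₃(q) = 1 + 2 Σ_{n≥1} q^{n²}`. -/
def theta3 : ℚ⟦X⟧ :=
  1 + 2 * PowerSeries.mk fun N => ∑ n ∈ Finset.Icc 1 N, if n ^ 2 = N then (1 : ℚ) else 0

/-- `θ₄(q) = 1 + 2 Σ_{n≥1} (-1)ⁿ q^{n²}`. -/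
def theta4 : ℚ⟦X⟧ :=
  1 + 2 * PowerSeries.mk fun N => ∑ n ∈ Finset.Icc 1 N, if n ^ 2 = N then (-1 : ℚ) ^ n else 0

/-- `Θ_{r,s} = θ₂^{4r} θ₃^{4s} + θ₂^{4s} θ₃^{4r}`. -/
def Theta (r s : ℕ) : ℚ⟦X⟧ :=
  theta2four ^ r * theta3 ^ (4 * s) + theta2four ^ s * theta3 ^ (4 * r)

/-- MacMahon's `C_{2t}(q) = Σ_{0<s₁<⋯<s_t} q^{Σ(2sᵢ-1)} ∏ (1-q^{2sᵢ-1})⁻²`,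
defined coefficientwise: tuples with some `sᵢ > N+1` do not affect the `N`-th coefficient. -/
def Cmac (t : ℕ) : ℚ⟦X⟧ := PowerSeries.mk fun N =>
  coeff N (∑ S ∈ (Finset.Icc 1 (N + 1)).powersetCard t,
    ∏ s ∈ S, (X ^ (2 * s - 1) * ((1 - X ^ (2 * s - 1) : ℚ⟦X⟧)⁻¹) ^ 2))

/-- MacMahon's `U_{2t}(q) = Σ_{0<k₁<⋯<k_t} q^{Σkᵢ} ∏ (1-q^{kᵢ})⁻²`,
defined coefficientwise by truncation. -/
def Umac (t : ℕ) : ℚ⟦X⟧ := PowerSeries.mk fun N =>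
  coeff N (∑ S ∈ (Finset.Icc 1 (N + 1)).powersetCard t,
    ∏ k ∈ S, (X ^ k * ((1 - X ^ k : ℚ⟦X⟧)⁻¹) ^ 2))

/-- `U*_{2t}(q) = Σ_{0<k₁≤⋯≤k_t} q^{Σkᵢ} ∏ (1-q^{kᵢ})⁻²`, a sum over multisets of
size `t`, defined coefficientwise by truncation. -/
def UmacStar (t : ℕ) : ℚ⟦X⟧ := PowerSeries.mk fun N =>
  coeff N (∑ m ∈ (Finset.Icc 1 (N + 1)).sym t,
    ((m : Multiset ℕ).map fun k => X ^ k * ((1 - X ^ k : ℚ⟦X⟧)⁻¹) ^ 2).prod)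

/-- `E₂(q²)`, the substitution `q ↦ q²` in `E₂`. -/
def E2sq : ℚ⟦X⟧ := PowerSeries.mk fun n => if 2 ∣ n then coeff (n / 2) E2 else 0

/-- `G₂(q) = 2 E₂(q²) - E₂(q)`. -/
def G2 : ℚ⟦X⟧ := 2 * E2sq - E2

/-- `Σ_{t≥0} U_{2t}(q)`, well defined since `U_{2t}` has order `≥ t(t+1)/2 ≥ t`. -/
def sumU : ℚ⟦X⟧ := PowerSeries.mk fun N => ∑ t ∈ Finset.range (N + 1), coeff N (Umac t)


private def fterm (k : ℕ) : ℚ⟦X⟧ := X ^ k * ((1 - X ^ k : ℚ⟦X⟧)⁻¹) ^ 2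

private def gterm (k : ℕ) : ℚ⟦X⟧ :=
  (1 - X ^ (6 * k)) *
    ((1 - X ^ k : ℚ⟦X⟧)⁻¹ * (1 - X ^ (2 * k) : ℚ⟦X⟧)⁻¹ * (1 - X ^ (3 * k) : ℚ⟦X⟧)⁻¹)

private lemma one_sub_X_pow_unit (k : ℕ) (hk : 1 ≤ k) :
    (1 - X ^ k : ℚ⟦X⟧) * (1 - X ^ k : ℚ⟦X⟧)⁻¹ = 1 := by
  apply PowerSeries.mul_inv_cancel
  simp [zero_pow (by omega : k ≠ 0)]

private lemma factor_eq (k : ℕ) (hk : 1 ≤ k) : 1 + fterm k = gterm k := by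
  unfold fterm gterm
  have h1 := one_sub_X_pow_unit k hk
  have h2 := one_sub_X_pow_unit (2 * k) (by omega)
  have h3 := one_sub_X_pow_unit (3 * k) (by omega)
  have hne : ((1 - X ^ k : ℚ⟦X⟧) ^ 2 * (1 - X ^ (2 * k)) * (1 - X ^ (3 * k))) ≠ 0 := by
    intro h
    have := congrArg (constantCoeff) h
    simp [zero_pow (by omega : k ≠ 0), zero_pow (by omega : 2 * k ≠ 0),
      zero_pow (by omega : 3 * k ≠ 0)] at this
  apply mul_right_cancel₀ hne
  have key : (1 - X ^ k : ℚ⟦X⟧) ^ 2 * (1 - X ^ (2 * k)) * (1 - X ^ (3 * k)) +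
      X ^ k * ((1 - X ^ (2 * k)) * (1 - X ^ (3 * k))) = (1 - X ^ (6 * k)) * (1 - X ^ k) := by
    have e2 : (X : ℚ⟦X⟧) ^ (2 * k) = (X ^ k) ^ 2 := by rw [← pow_mul, mul_comm]
    have e3 : (X : ℚ⟦X⟧) ^ (3 * k) = (X ^ k) ^ 3 := by rw [← pow_mul, mul_comm]
    have e6 : (X : ℚ⟦X⟧) ^ (6 * k) = (X ^ k) ^ 6 := by rw [← pow_mul, mul_comm]
    rw [e2, e3, e6]; ring
  calc (1 + X ^ k * ((1 - X ^ k : ℚ⟦X⟧)⁻¹) ^ 2) *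
        ((1 - X ^ k) ^ 2 * (1 - X ^ (2 * k)) * (1 - X ^ (3 * k)))
      = (1 - X ^ k) ^ 2 * (1 - X ^ (2 * k)) * (1 - X ^ (3 * k)) +
        X ^ k * ((1 - X ^ k) * (1 - X ^ k)⁻¹) ^ 2 *
          ((1 - X ^ (2 * k)) * (1 - X ^ (3 * k))) := by ring
    _ = (1 - X ^ (6 * k)) * (1 - X ^ k) := by rw [h1]; simpa using key
    _ = (1 - X ^ (6 * k)) * (((1 - X ^ k) * (1 - X ^ k)⁻¹) *
          ((1 - X ^ (2 * k)) * (1 - X ^ (2 * k))⁻¹) *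
          ((1 - X ^ (3 * k)) * (1 - X ^ (3 * k))⁻¹) * (1 - X ^ k)) := by
        rw [h1, h2, h3]; ring
    _ = (1 - X ^ (6 * k)) *
          ((1 - X ^ k : ℚ⟦X⟧)⁻¹ * (1 - X ^ (2 * k) : ℚ⟦X⟧)⁻¹ * (1 - X ^ (3 * k) : ℚ⟦X⟧)⁻¹) *
          ((1 - X ^ k) ^ 2 * (1 - X ^ (2 * k)) * (1 - X ^ (3 * k))) := by ring

private lemma fterm_dvd (k : ℕ) : (X : ℚ⟦X⟧) ^ k ∣ fterm k :=
  Dvd.dvd.mul_right dvd_rfl _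

private lemma coeff_top_zero (N : ℕ) :
    coeff N (∑ S ∈ (Finset.Icc 1 (N + 1)).powersetCard (N + 1), ∏ k ∈ S, fterm k) = 0 := by
  have h := Finset.powersetCard_self (Finset.Icc 1 (N + 1))
  rw [(by simp : (Finset.Icc 1 (N + 1)).card = N + 1)] at h
  rw [h, sum_singleton]
  have hprod : ∏ k ∈ Finset.Icc 1 (N + 1), fterm k
      = X ^ (∑ k ∈ Finset.Icc 1 (N + 1), k) *
        ∏ k ∈ Finset.Icc 1 (N + 1), ((1 - X ^ k : ℚ⟦X⟧)⁻¹) ^ 2 := by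
    rw [← prod_pow_eq_pow_sum, ← prod_mul_distrib]; rfl
  have hle : N + 1 ≤ ∑ k ∈ Finset.Icc 1 (N + 1), k :=
    Finset.single_le_sum (fun i _ => Nat.zero_le i) (by simp)
  have hdvd : (X : ℚ⟦X⟧) ^ (N + 1) ∣ ∏ k ∈ Finset.Icc 1 (N + 1), fterm k := by
    rw [hprod]; exact Dvd.dvd.mul_right (pow_dvd_pow _ hle) _
  exact PowerSeries.X_pow_dvd_iff.mp hdvd N (lt_add_one N)

private lemma sum_eq_prod (N : ℕ) :
    ∑ t ∈ Finset.range (N + 2),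
        coeff N (∑ S ∈ (Finset.Icc 1 (N + 1)).powersetCard t, ∏ k ∈ S, fterm k)
      = coeff N (∏ k ∈ Finset.Icc 1 (N + 1), (1 + fterm k)) := by
  have h1 : ∏ k ∈ Finset.Icc 1 (N + 1), (1 + fterm k)
      = ∑ S ∈ (Finset.Icc 1 (N + 1)).powerset, ∏ k ∈ S, fterm k := by
    have := Finset.prod_add fterm (fun _ => (1 : ℚ⟦X⟧)) (Finset.Icc 1 (N + 1))
    simp only [prod_const_one, mul_one] at this
    rw [← this]
    exact Finset.prod_congr rfl fun k _ => by ring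
  have hmap : ∀ S ∈ (Finset.Icc 1 (N + 1)).powerset, S.card ∈ Finset.range (N + 2) := by
    intro S hS
    rw [mem_powerset] at hS
    have := Finset.card_le_card hS
    simp only [Nat.card_Icc] at this
    simp only [mem_range]; omega
  rw [h1, map_sum,
    ← Finset.sum_fiberwise_of_maps_to hmap (fun S => coeff N (∏ k ∈ S, fterm k))]
  refine Finset.sum_congr rfl fun t _ => ?_
  rw [map_sum]
  refine Finset.sum_congr ?_ fun _ _ => rfl
  rw [powersetCard_eq_filter]

/-- `Σ_{t≥0} U_{2t} = ∏_{k≥1} (1-q^{6k})/((1-qᵏ)(1-q^{2k})(1-q^{3k}))`. -/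
theorem sum_Umac_eq :
    sumU = PowerSeries.mk fun N => coeff N (∏ k ∈ Finset.Icc 1 N,
      ((1 - X ^ (6 * k)) *
        ((1 - X ^ k : ℚ⟦X⟧)⁻¹ * (1 - X ^ (2 * k) : ℚ⟦X⟧)⁻¹ * (1 - X ^ (3 * k) : ℚ⟦X⟧)⁻¹))) := by
  ext N
  simp only [sumU, Umac, coeff_mk]
  show ∑ t ∈ Finset.range (N + 1),
      coeff N (∑ S ∈ (Finset.Icc 1 (N + 1)).powersetCard t, ∏ k ∈ S, fterm k)
    = coeff N (∏ k ∈ Finset.Icc 1 N, gterm k)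
  have hstep : ∑ t ∈ Finset.range (N + 1),
      coeff N (∑ S ∈ (Finset.Icc 1 (N + 1)).powersetCard t, ∏ k ∈ S, fterm k)
    = ∑ t ∈ Finset.range (N + 2),
      coeff N (∑ S ∈ (Finset.Icc 1 (N + 1)).powersetCard t, ∏ k ∈ S, fterm k) := by
    conv_rhs => rw [Finset.sum_range_succ]
    rw [coeff_top_zero, add_zero]
  rw [hstep, sum_eq_prod]
  have hcong : ∏ k ∈ Finset.Icc 1 (N + 1), (1 + fterm k)
      = ∏ k ∈ Finset.Icc 1 (N + 1), gterm k :=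
    Finset.prod_congr rfl fun k hk => factor_eq k (Finset.mem_Icc.mp hk).1
  rw [hcong, Finset.prod_Icc_succ_top (by omega : 1 ≤ N + 1),
    ← factor_eq (N + 1) (by omega), mul_add, mul_one, map_add]
  have hz : coeff N ((∏ k ∈ Finset.Icc 1 N, gterm k) * fterm (N + 1)) = 0 := by
    have hdvd : (X : ℚ⟦X⟧) ^ (N + 1) ∣ (∏ k ∈ Finset.Icc 1 N, gterm k) * fterm (N + 1) :=
      Dvd.dvd.mul_left (fterm_dvd (N + 1)) _
    exact PowerSeries.X_pow_dvd_iff.mp hdvd N (lt_add_one N)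
  rw [hz, add_zero]
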